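/- Assume (A), i.e. F(·|x) is continuous on (−∞,τ_c(x)], G(·|x) is continuous on (−∞,τ_c(x)) and G(τ_c(x)|x)−G(τ_c(x)⁻|x)>0, and let H(·|x), H^u(·|x) be the induced conditional distribution of T and sub-distribution of uncensored observations with H(τ_c(x)⁻|x)<1. Then for every t≤τ_c(x) and every realization (T,δ)∈ℝ×{0,1} with T≤τ_c(x): ∫_{(−∞,t]} (1{T<s}−H(s⁻|x))/(1−H(s⁻|x))² dH^u(s|x) + (1{T≤t,δ=1}−H^u(t|x))/(1−H(t⁻|x)) − ∫_{(−∞,t]} (1{T≤s,δ=1}−H^u(s|x))/(1−H(s⁻|x))² dH(s⁻|x) = 1{δ=1,T≤t}/(1−H(T⁻|x)) − ∫_{(−∞,T∧t]} dH^u(s|x)/(1−H(s⁻|x))²; equivalently, the influence function g(t,T,δ|x) of the Beran estimator can be rewritten as g(t,T,δ|x)=(1−F(t|x)){1{δ=1,T≤t}/(1−H(T⁻|x)) − ∫_{(−∞,T∧t]} dH^u(s|x)/(1−H(s⁻|x))²}. -/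

import Mathlib

open MeasureTheory Set Function Filter Topology

lemma stieltjes_ge_of_tendsto (f : StieltjesFunction ℝ) {l : ℝ}
    (hf : Tendsto f atBot (nhds l)) (y : ℝ) : l ≤ f y :=
  le_of_tendsto hf (eventually_atBot.2 ⟨y, fun _ hz => f.mono hz⟩)

lemma stieltjes_measure_Iio (f : StieltjesFunction ℝ) {l : ℝ}
    (hf : Tendsto f atBot (nhds l)) (x : ℝ) :
    f.measure (Iio x) = ENNReal.ofReal (leftLim f x - l) := by
  have h1 : l ≤ leftLim f x :=
    le_trans (stieltjes_ge_of_tendsto f hf (x - 1)) (f.mono.le_leftLim (by linarith))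
  have h2 : leftLim f x ≤ f x := f.mono.leftLim_le le_rfl
  have hu : Iio x ∪ {x} = Iic x := Iio_union_right
  have hd : f.measure (Iio x ∪ {x}) = f.measure (Iio x) + f.measure {x} :=
    measure_union (by simp) (measurableSet_singleton x)
  rw [hu, f.measure_Iic hf, f.measure_singleton] at hd
  have key : ENNReal.ofReal (f x - l)
      = ENNReal.ofReal (leftLim f x - l) + ENNReal.ofReal (f x - leftLim f x) := by
    rw [← ENNReal.ofReal_add (by linarith) (by linarith)]
    ring_nf
  rw [key] at hd
  exact WithTop.add_right_cancel ENNReal.ofReal_ne_top hd.symm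

lemma stieltjes_map_restrict (H : StieltjesFunction ℝ) {τ b : ℝ} (hb : b ≤ τ)
    (hcont : ContinuousOn (⇑H) (Iio τ)) (hbot : Tendsto (⇑H) atBot (nhds 0)) :
    Measure.map (⇑H) (H.measure.restrict (Iio b))
      = volume.restrict (Ico 0 (leftLim (⇑H) b)) := by
  have hHm : Measurable (⇑H) := H.mono.measurable
  have hH0 : ∀ y, 0 ≤ H y := stieltjes_ge_of_tendsto H hbot
  set c := leftLim (⇑H) b with hc
  haveI : IsFiniteMeasure (H.measure.restrict (Iio b)) := by
    constructor
    rw [Measure.restrict_apply_univ, stieltjes_measure_Iio H hbot]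
    exact ENNReal.ofReal_lt_top
  haveI : IsFiniteMeasure (Measure.map (⇑H) (H.measure.restrict (Iio b))) := by
    constructor
    rw [Measure.map_apply hHm MeasurableSet.univ]
    exact measure_lt_top _ _
  apply Measure.ext_of_Iic
  intro x
  rw [Measure.map_apply hHm measurableSet_Iic, Measure.restrict_apply (hHm measurableSet_Iic),
    Measure.restrict_apply measurableSet_Iic]
  rcases lt_or_ge x 0 with hx | hx
  · have h1 : (⇑H) ⁻¹' Iic x ∩ Iio b = ∅ := by
      apply eq_empty_iff_forall_notMem.2
      rintro s ⟨hs1, _⟩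
      exact absurd (le_trans (hH0 s) hs1) (not_le.2 hx)
    have h2 : Iic x ∩ Ico 0 c = ∅ := by
      apply eq_empty_iff_forall_notMem.2
      rintro y ⟨hy1, hy2, _⟩
      exact absurd (le_trans hy2 hy1) (not_le.2 hx)
    rw [h1, h2]; simp
  rcases le_or_gt c x with hcx | hxc
  · have h1 : (⇑H) ⁻¹' Iic x ∩ Iio b = Iio b := by
      apply inter_eq_right.2
      intro s hs
      exact le_trans (H.mono.le_leftLim hs) hcx
    have h2 : Iic x ∩ Ico 0 c = Ico 0 c :=
      inter_eq_right.2 (fun y hy => le_trans (le_of_lt hy.2) hcx)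
    rw [h1, h2, stieltjes_measure_Iio H hbot, Real.volume_Ico]
  · -- 0 ≤ x < c
    have hc0 : 0 < c := lt_of_le_of_lt hx hxc
    obtain ⟨s0, hs0b, hs0⟩ : ∃ s0, s0 < b ∧ x < H s0 := by
      by_contra hcon
      push_neg at hcon
      have hcle : c ≤ x := by
        rw [hc, H.mono.leftLim_eq_sSup (x := b)]
        apply csSup_le (Nonempty.image _ ⟨b - 1, by simp⟩)
        rintro y ⟨s, hs, rfl⟩
        exact hcon s hs
      exact absurd hcle (not_le.2 hxc)
    by_cases hne : ∃ s, H s ≤ x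
    · obtain ⟨s1, hs1⟩ := hne
      have hSne : {s : ℝ | H s ≤ x}.Nonempty := ⟨s1, hs1⟩
      have hSbdd : BddAbove {s : ℝ | H s ≤ x} := by
        refine ⟨s0, fun s hs => le_of_not_gt (fun h => ?_)⟩
        exact absurd (le_trans (H.mono h.le) hs) (not_le.2 hs0)
      set u := sSup {s : ℝ | H s ≤ x} with hu
      have hus0 : u ≤ s0 := csSup_le hSne (fun s hs =>
        le_of_not_gt (fun h => absurd (le_trans (H.mono h.le) hs) (not_le.2 hs0)))
      have hub : u < b := lt_of_le_of_lt hus0 hs0b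
      have huτ : u < τ := lt_of_lt_of_le hub hb
      -- x ≤ H u by right continuity
      have hxu : x ≤ H u := by
        have ht : Tendsto (⇑H) (nhdsWithin u (Ioi u)) (nhds (H u)) :=
          (H.right_continuous u).mono_left (nhdsWithin_mono u Ioi_subset_Ici_self)
        refine ge_of_tendsto ht ?_
        filter_upwards [self_mem_nhdsWithin] with v hv
        by_contra hcv
        push_neg at hcv
        exact absurd (le_csSup hSbdd hcv.le) (not_le.2 hv)
      -- H u ≤ x by left continuity
      have hux : H u ≤ x := by
        have hca : ContinuousAt (⇑H) u := hcont.continuousAt (Iio_mem_nhds huτ)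
        have hll : leftLim (⇑H) u = H u :=
          leftLim_eq_of_tendsto
            (hca.tendsto.mono_left nhdsWithin_le_nhds)
        rw [← hll, H.mono.leftLim_eq_sSup (x := u)]
        apply csSup_le (Nonempty.image _ ⟨u - 1, by simp⟩)
        rintro y ⟨v, hv, rfl⟩
        obtain ⟨s, hs, hvs⟩ := exists_lt_of_lt_csSup hSne hv
        exact le_trans (H.mono hvs.le) hs
      have hHux : H u = x := le_antisymm hux hxu
      have h1 : (⇑H) ⁻¹' Iic x ∩ Iio b = Iic u := by
        ext s
        simp only [mem_inter_iff, mem_preimage, mem_Iic, mem_Iio]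
        constructor
        · rintro ⟨hs1, _⟩
          exact le_csSup hSbdd hs1
        · intro hs
          exact ⟨le_trans (H.mono hs) (le_of_eq hHux), lt_of_le_of_lt hs hub⟩
      have h2 : Iic x ∩ Ico 0 c = Icc 0 x := by
        ext y
        simp only [mem_inter_iff, mem_Iic, mem_Ico, mem_Icc]
        exact ⟨fun ⟨a1, a2, _⟩ => ⟨a2, a1⟩, fun ⟨a1, a2⟩ => ⟨a2, a1, lt_of_le_of_lt a2 hxc⟩⟩
      rw [h1, h2, H.measure_Iic hbot, hHux, Real.volume_Icc]
    · push_neg at hne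
      have hx0 : x = 0 := by
        refine le_antisymm ?_ hx
        by_contra hx'
        push_neg at hx'
        obtain ⟨s, hs⟩ := (hbot.eventually (gt_mem_nhds hx')).exists
        exact absurd hs (not_lt.2 (hne s).le)
      have h1 : (⇑H) ⁻¹' Iic x ∩ Iio b = ∅ := by
        apply eq_empty_iff_forall_notMem.2
        rintro s ⟨hs1, _⟩
        exact absurd hs1 (not_le.2 (hne s))
      have h2 : Iic x ∩ Ico 0 c = {0} := by
        ext y
        simp only [mem_inter_iff, mem_Iic, mem_Ico, mem_singleton_iff, hx0]
        constructor
        · rintro ⟨a1, a2, _⟩; linarith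
        · rintro rfl; exact ⟨le_rfl, le_rfl, hc0⟩
      rw [h1, h2]
      simp

lemma stieltjes_key_int (H : StieltjesFunction ℝ) {τ b : ℝ} (hb : b ≤ τ)
    (hcont : ContinuousOn (⇑H) (Iio τ)) (hbot : Tendsto (⇑H) atBot (nhds 0))
    (hτ : leftLim (⇑H) τ < 1) :
    ∫ s in Iio b, ((1 - leftLim (⇑H) s)⁻¹) ^ 2 ∂H.measure
      = (1 - leftLim (⇑H) b)⁻¹ - 1 := by
  have hH0 : ∀ y, 0 ≤ H y := stieltjes_ge_of_tendsto H hbot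
  set c := leftLim (⇑H) b with hc
  have hcτ : c ≤ leftLim (⇑H) τ := H.mono.leftLim hb
  have hc1 : c < 1 := lt_of_le_of_lt hcτ hτ
  have hc0 : 0 ≤ c := le_trans (hH0 (b - 1)) (H.mono.le_leftLim (by linarith))
  have hcongr : EqOn (fun s => ((1 - leftLim (⇑H) s)⁻¹) ^ 2)
      (fun s => ((1 - H s)⁻¹) ^ 2) (Iio b) := by
    intro s hs
    have hll : leftLim (⇑H) s = H s := by
      have hca : ContinuousAt (⇑H) s :=
        hcont.continuousAt (Iio_mem_nhds (lt_of_lt_of_le hs hb))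
      exact leftLim_eq_of_tendsto
        (hca.tendsto.mono_left nhdsWithin_le_nhds)
    simp only [hll]
  rw [setIntegral_congr_fun measurableSet_Iio hcongr]
  have hmeas : Measurable (fun x : ℝ => ((1 - x)⁻¹) ^ 2) :=
    ((measurable_const.sub measurable_id).inv).pow_const 2
  have hstep2 : ∫ s in Iio b, ((1 - H s)⁻¹) ^ 2 ∂H.measure
      = ∫ x in Ico 0 c, ((1 - x)⁻¹) ^ 2 := by
    rw [← stieltjes_map_restrict H hb hcont hbot,
      integral_map H.mono.measurable.aemeasurable hmeas.aestronglyMeasurable]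
  rw [hstep2]
  have hne : ∀ x ∈ uIcc (0:ℝ) c, 1 - x ≠ 0 := by
    intro x hx
    rw [uIcc_of_le hc0] at hx
    have : x ≤ c := hx.2
    intro h0
    nlinarith
  have hderiv : ∀ x ∈ uIcc (0:ℝ) c,
      HasDerivAt (fun y : ℝ => (1 - y)⁻¹) (((1 - x)⁻¹) ^ 2) x := by
    intro x hx
    have h1 : HasDerivAt (fun y : ℝ => 1 - y) (-1) x := (hasDerivAt_id x).const_sub 1
    have h2 := h1.inv (hne x hx)
    rw [show ((1 - x)⁻¹) ^ 2 = -(-1) / (1 - x) ^ 2 by rw [neg_neg, one_div, inv_pow]]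
    exact h2
  have hint : IntervalIntegrable (fun x : ℝ => ((1 - x)⁻¹) ^ 2) volume 0 c := by
    apply ContinuousOn.intervalIntegrable
    exact ((continuousOn_const.sub continuousOn_id).inv₀ hne).pow 2
  have hFTC := intervalIntegral.integral_eq_sub_of_hasDerivAt hderiv hint
  rw [intervalIntegral.integral_of_le hc0] at hFTC
  rw [integral_Ico_eq_integral_Ioo, ← integral_Ioc_eq_integral_Ioo, hFTC]
  norm_num

lemma integrable_restrict_of_bdd {μ : Measure ℝ} {s : Set ℝ} (hs : MeasurableSet s)
    (hμ : μ s ≠ ⊤) {f : ℝ → ℝ} (hf : Measurable f) {C : ℝ}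
    (hC : ∀ x ∈ s, |f x| ≤ C) : Integrable f (μ.restrict s) := by
  haveI : IsFiniteMeasure (μ.restrict s) :=
    ⟨by rwa [Measure.restrict_apply_univ, lt_top_iff_ne_top]⟩
  refine Integrable.mono' (integrable_const C) hf.aestronglyMeasurable ?_
  rw [ae_restrict_iff' hs]
  exact ae_of_all _ (fun x hx => by simpa [Real.norm_eq_abs] using hC x hx)

lemma stieltjes_L1 (H Hu : StieltjesFunction ℝ) {τ t : ℝ} (ht : t ≤ τ)
    (hcont : ContinuousOn (⇑H) (Iio τ)) (hbot : Tendsto (⇑H) atBot (nhds 0))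
    (hτ : leftLim (⇑H) τ < 1) (hubot : Tendsto (⇑Hu) atBot (nhds 0)) :
    ∫ s in Iic t, (1 - leftLim (⇑H) s)⁻¹ ∂Hu.measure
      = Hu t * (1 - leftLim (⇑H) t)⁻¹
        - ∫ s in Iio t, Hu s * ((1 - leftLim (⇑H) s)⁻¹) ^ 2 ∂H.measure := by
  have hHu0 : ∀ y, 0 ≤ Hu y := stieltjes_ge_of_tendsto Hu hubot
  set ε := 1 - leftLim (⇑H) τ with hε
  have hεpos : 0 < ε := by rw [hε]; linarith
  have hpos : ∀ s, s ≤ τ → ε ≤ 1 - leftLim (⇑H) s := by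
    intro s hs
    have := H.mono.leftLim hs
    rw [hε]; linarith
  have hinvle : ∀ s, s ≤ τ → (1 - leftLim (⇑H) s)⁻¹ ≤ ε⁻¹ := by
    intro s hs
    exact inv_anti₀ hεpos (hpos s hs)
  have hinv0 : ∀ s, s ≤ τ → 0 ≤ (1 - leftLim (⇑H) s)⁻¹ := by
    intro s hs
    exact inv_nonneg.2 (le_trans hεpos.le (hpos s hs))
  have mL : Measurable (leftLim (⇑H)) := H.mono.leftLim.measurable
  have mA : Measurable (fun s => (1 - leftLim (⇑H) s)⁻¹) := (measurable_const.sub mL).inv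
  have mA2 : Measurable (fun s => ((1 - leftLim (⇑H) s)⁻¹) ^ 2) := mA.pow_const 2
  have mHu : Measurable (⇑Hu) := Hu.mono.measurable
  have hμfin : Hu.measure (Iic t) ≠ ⊤ := by
    rw [Hu.measure_Iic hubot]; exact ENNReal.ofReal_ne_top
  have hνfin : H.measure (Iio t) ≠ ⊤ := by
    rw [stieltjes_measure_Iio H hbot]; exact ENNReal.ofReal_ne_top
  haveI hFμ : IsFiniteMeasure (Hu.measure.restrict (Iic t)) :=
    ⟨by rwa [Measure.restrict_apply_univ, lt_top_iff_ne_top]⟩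
  haveI hFν : IsFiniteMeasure (H.measure.restrict (Iio t)) :=
    ⟨by rwa [Measure.restrict_apply_univ, lt_top_iff_ne_top]⟩
  set q : ℝ → ℝ := fun u => ((1 - leftLim (⇑H) u)⁻¹) ^ 2 with hqdef
  have hqbound : ∀ u, u ≤ τ → |q u| ≤ ε⁻¹ ^ 2 := by
    intro u hu
    rw [hqdef, abs_of_nonneg (by positivity)]
    exact pow_le_pow_left₀ (hinv0 u hu) (hinvle u hu) 2
  -- Fubini
  have hm : Measurable (uncurry (fun s u => if u < s then q u else 0)) := by
    apply Measurable.ite (measurableSet_lt measurable_snd measurable_fst)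
    · exact mA2.comp measurable_snd
    · exact measurable_const
  have hInt : Integrable (uncurry (fun s u => if u < s then q u else 0))
      ((Hu.measure.restrict (Iic t)).prod (H.measure.restrict (Iio t))) := by
    refine Integrable.mono' (integrable_const (ε⁻¹ ^ 2)) hm.aestronglyMeasurable ?_
    rw [Measure.prod_restrict, ae_restrict_iff' (measurableSet_Iic.prod measurableSet_Iio)]
    refine ae_of_all _ ?_
    rintro ⟨s, u⟩ ⟨_, hu⟩
    simp only [uncurry]
    by_cases h : u < s
    · rw [if_pos h, Real.norm_eq_abs]
      exact hqbound u (le_of_lt (lt_of_lt_of_le hu ht))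
    · rw [if_neg h, Real.norm_eq_abs, abs_zero]
      positivity
  have hswap := integral_integral_swap hInt
  -- LHS of swap
  have hL1 : ∀ s ∈ Iic t,
      (∫ u in Iio t, (if u < s then q u else 0) ∂H.measure)
        = (1 - leftLim (⇑H) s)⁻¹ - 1 := by
    intro s hs
    have hind : (fun u => if u < s then q u else 0) = (Iio s).indicator q := by
      funext u; simp [Set.indicator_apply, mem_Iio]
    rw [hind, integral_indicator measurableSet_Iio,
      Measure.restrict_restrict measurableSet_Iio,
      inter_eq_left.2 (Iio_subset_Iio hs)]
    exact stieltjes_key_int H (le_trans hs ht) hcont hbot hτ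
  -- RHS of swap
  have hR1 : ∀ u ∈ Iio t,
      (∫ s in Iic t, (if u < s then q u else 0) ∂Hu.measure)
        = (Hu t - Hu u) * q u := by
    intro u hu
    have hind : (fun s => if u < s then q u else 0) = (Ioi u).indicator (fun _ => q u) := by
      funext s; simp [Set.indicator_apply, mem_Ioi]
    rw [hind, integral_indicator measurableSet_Ioi,
      Measure.restrict_restrict measurableSet_Ioi, Ioi_inter_Iic, setIntegral_const,
      measureReal_def, Hu.measure_Ioc, ENNReal.toReal_ofReal (by linarith [Hu.mono (le_of_lt hu)]), smul_eq_mul]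
  rw [setIntegral_congr_fun measurableSet_Iic hL1] at hswap
  rw [setIntegral_congr_fun measurableSet_Iio hR1] at hswap
  -- integrabilities
  have int_sub1 : Integrable (fun s => (1 - leftLim (⇑H) s)⁻¹ - 1)
      (Hu.measure.restrict (Iic t)) := by
    refine integrable_restrict_of_bdd measurableSet_Iic hμfin
      ((mA.sub measurable_const)) (C := ε⁻¹ + 1) ?_
    intro s hs
    have h1 := hinvle s (le_trans hs ht)
    have h2 := hinv0 s (le_trans hs ht)
    rw [abs_le]; constructor <;> [linarith; linarith]
  have int_q : Integrable q (H.measure.restrict (Iio t)) := by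
    refine integrable_restrict_of_bdd measurableSet_Iio hνfin mA2 (C := ε⁻¹ ^ 2) ?_
    intro u hu
    exact hqbound u (le_of_lt (lt_of_lt_of_le hu ht))
  have int_Huq : Integrable (fun u => Hu u * q u) (H.measure.restrict (Iio t)) := by
    refine integrable_restrict_of_bdd measurableSet_Iio hνfin (mHu.mul mA2)
      (C := Hu t * ε⁻¹ ^ 2) ?_
    intro u hu
    rw [abs_mul, abs_of_nonneg (hHu0 u)]
    have h1 := hqbound u (le_of_lt (lt_of_lt_of_le hu ht))
    have h2 := Hu.mono (le_of_lt hu)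
    have h3 : (0:ℝ) ≤ |q u| := abs_nonneg _
    nlinarith [hHu0 u]
  -- compute both sides
  have hRHS : (∫ u in Iio t, (Hu t - Hu u) * q u ∂H.measure)
      = Hu t * ((1 - leftLim (⇑H) t)⁻¹ - 1)
        - ∫ u in Iio t, Hu u * q u ∂H.measure := by
    have : (fun u => (Hu t - Hu u) * q u) = fun u => Hu t * q u - Hu u * q u := by
      funext u; ring
    rw [this, integral_sub (int_q.const_mul (Hu t)) int_Huq, integral_const_mul,
      stieltjes_key_int H ht hcont hbot hτ]
  have hone : (∫ _ in Iic t, (1:ℝ) ∂Hu.measure) = Hu t := by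
    rw [setIntegral_const, measureReal_def, Hu.measure_Iic hubot, sub_zero,
      ENNReal.toReal_ofReal (hHu0 t), smul_eq_mul, mul_one]
  have hLHS : (∫ s in Iic t, (1 - leftLim (⇑H) s)⁻¹ ∂Hu.measure)
      = (∫ s in Iic t, ((1 - leftLim (⇑H) s)⁻¹ - 1) ∂Hu.measure) + Hu t := by
    rw [← hone, ← integral_add int_sub1 (integrable_const 1)]
    congr 1
    funext s
    ring
  rw [hLHS, hswap, hRHS]
  ring

/-- The influence function `g(t, T, δ | x)` appearing in the i.i.d. representation of the
Beran estimator. -/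
noncomputable def infl (H Hu : StieltjesFunction ℝ) (Fx : ℝ → ℝ) (t Ti : ℝ) (di : Bool) : ℝ :=
  (1 - Fx t) *
    ((∫ s in Iic t, ((if Ti < s then (1 : ℝ) else 0) - leftLim (⇑H) s) /
        (1 - leftLim (⇑H) s) ^ 2 ∂Hu.measure)
      + ((if Ti ≤ t ∧ di = true then (1 : ℝ) else 0) - Hu t) / (1 - leftLim (⇑H) t)
      - ∫ s in Iio t, ((if Ti ≤ s ∧ di = true then (1 : ℝ) else 0) - Hu s) /
          (1 - leftLim (⇑H) s) ^ 2 ∂H.measure)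

/-- under assumption (A), the influence function of the Beran estimator can
be rewritten (by integration by parts) as
`g(t,T,δ|x) = (1-F(t|x)) {1{δ=1,T≤t}/(1-H(T⁻|x)) - ∫_{(-∞,T∧t]} dHᵘ(s|x)/(1-H(s⁻|x))²}`.
Here `F`, `G` are the conditional distributions of the survival and censoring times,
`H`, `Hᵘ` the induced conditional distribution of `T` and sub-distribution of the
uncensored observations (so `1-H = (1-F)(1-G)`, `0 ≤ Hᵘ ≤ H`, `Hᵘ` is continuous up to
`τ_c(x)` and all tend to `0` at `-∞`), with `H(τ_c(x)⁻|x) < 1`. -/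
theorem influence_function_rewriting
    (F G H Hu : StieltjesFunction ℝ) (τc : ℝ)
    -- assumption (A)
    (hFcont : ContinuousOn (⇑F) (Iic τc))
    (hGcont : ContinuousOn (⇑G) (Iio τc))
    (hjump : 0 < G τc - leftLim (⇑G) τc)
    -- `H`, `Hᵘ` are induced by the censoring model
    (hFG : ∀ s, 1 - H s = (1 - F s) * (1 - G s))
    (hHuH : ∀ s, 0 ≤ Hu s ∧ Hu s ≤ H s)
    (hHucont : ContinuousOn (⇑Hu) (Iic τc))
    (hFbot : Filter.Tendsto (⇑F) Filter.atBot (nhds 0))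
    (hGbot : Filter.Tendsto (⇑G) Filter.atBot (nhds 0))
    (hHubot : Filter.Tendsto (⇑Hu) Filter.atBot (nhds 0))
    (hHτ : leftLim (⇑H) τc < 1)
    -- a realization of the data
    (T : ℝ) (δ : Bool) (hT : T ≤ τc) :
    ∀ t ≤ τc,
      ((∫ s in Iic t, ((if T < s then (1 : ℝ) else 0) - leftLim (⇑H) s) /
          (1 - leftLim (⇑H) s) ^ 2 ∂Hu.measure)
        + ((if T ≤ t ∧ δ = true then (1 : ℝ) else 0) - Hu t) / (1 - leftLim (⇑H) t)
        - ∫ s in Iio t, ((if T ≤ s ∧ δ = true then (1 : ℝ) else 0) - Hu s) /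
            (1 - leftLim (⇑H) s) ^ 2 ∂H.measure) =
        (if δ = true ∧ T ≤ t then (1 : ℝ) else 0) / (1 - leftLim (⇑H) T) -
          ∫ s in Iic (min T t), ((1 - leftLim (⇑H) s)⁻¹) ^ 2 ∂Hu.measure ∧
      infl H Hu (⇑F) t T δ =
        (1 - F t) *
          ((if δ = true ∧ T ≤ t then (1 : ℝ) else 0) / (1 - leftLim (⇑H) T) -
            ∫ s in Iic (min T t), ((1 - leftLim (⇑H) s)⁻¹) ^ 2 ∂Hu.measure) := by
  -- basic facts about H
  have hHeq : ∀ s, H s = 1 - (1 - F s) * (1 - G s) := fun s => by have := hFG s; linarith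
  have hHbot : Tendsto (⇑H) atBot (nhds 0) := by
    have h1 : Tendsto (fun s => 1 - (1 - F s) * (1 - G s)) atBot
        (nhds (1 - (1 - 0) * (1 - 0))) :=
      tendsto_const_nhds.sub ((tendsto_const_nhds.sub hFbot).mul (tendsto_const_nhds.sub hGbot))
    norm_num at h1
    exact Tendsto.congr (fun s => (hHeq s).symm) h1
  have hHcont : ContinuousOn (⇑H) (Iio τc) := by
    have h1 : ContinuousOn (fun s => 1 - (1 - F s) * (1 - G s)) (Iio τc) :=
      continuousOn_const.sub
        ((continuousOn_const.sub (hFcont.mono Iio_subset_Iic_self)).mul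
          (continuousOn_const.sub hGcont))
    exact h1.congr (fun s _ => hHeq s)
  have hHu0 : ∀ y, 0 ≤ Hu y := fun y => (hHuH y).1
  -- positivity facts
  have hpos : ∀ s, s ≤ τc → (0:ℝ) < 1 - leftLim (⇑H) s := by
    intro s hs
    have := H.mono.leftLim hs
    linarith
  have hinv0 : ∀ s, s ≤ τc → (0:ℝ) ≤ (1 - leftLim (⇑H) s)⁻¹ :=
    fun s hs => inv_nonneg.2 (hpos s hs).le
  have hinvle : ∀ s, s ≤ τc → (1 - leftLim (⇑H) s)⁻¹ ≤ (1 - leftLim (⇑H) τc)⁻¹ := by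
    intro s hs
    exact inv_anti₀ (by linarith) (by have := H.mono.leftLim hs; linarith)
  set B : ℝ := (1 - leftLim (⇑H) τc)⁻¹ with hB
  have hB0 : 0 ≤ B := inv_nonneg.2 (by linarith)
  -- measurability
  have mL : Measurable (leftLim (⇑H)) := H.mono.leftLim.measurable
  have mA : Measurable (fun s => (1 - leftLim (⇑H) s)⁻¹) := (measurable_const.sub mL).inv
  have mA2 : Measurable (fun s => ((1 - leftLim (⇑H) s)⁻¹) ^ 2) := mA.pow_const 2
  have mHu : Measurable (⇑Hu) := Hu.mono.measurable
  have hqb : ∀ s, s ≤ τc → |((1 - leftLim (⇑H) s)⁻¹) ^ 2| ≤ B ^ 2 := by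
    intro s hs
    rw [abs_of_nonneg (by positivity)]
    exact pow_le_pow_left₀ (hinv0 s hs) (hinvle s hs) 2
  intro t ht
  -- finiteness
  have hμfin : Hu.measure (Iic t) ≠ ⊤ := by
    rw [Hu.measure_Iic hHubot]; exact ENNReal.ofReal_ne_top
  have hνfin : H.measure (Iio t) ≠ ⊤ := by
    rw [stieltjes_measure_Iio H hHbot]; exact ENNReal.ofReal_ne_top
  -- claim A
  have intJ : Integrable (fun s => (1 - leftLim (⇑H) s)⁻¹) (Hu.measure.restrict (Iic t)) := by
    refine integrable_restrict_of_bdd measurableSet_Iic hμfin mA (C := B) ?_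
    intro s hs
    rw [abs_of_nonneg (hinv0 s (le_trans hs ht))]
    exact hinvle s (le_trans hs ht)
  have intB' : Integrable (fun s => if s ≤ T then ((1 - leftLim (⇑H) s)⁻¹) ^ 2 else 0)
      (Hu.measure.restrict (Iic t)) := by
    refine integrable_restrict_of_bdd measurableSet_Iic hμfin
      (Measurable.ite measurableSet_Iic mA2 measurable_const) (C := B ^ 2) ?_
    intro s hs
    by_cases h : s ≤ T
    · rw [if_pos h]; exact hqb s (le_trans hs ht)
    · rw [if_neg h, abs_zero]; positivity
  have hA : (∫ s in Iic t, ((if T < s then (1 : ℝ) else 0) - leftLim (⇑H) s) /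
        (1 - leftLim (⇑H) s) ^ 2 ∂Hu.measure)
      = (∫ s in Iic t, (1 - leftLim (⇑H) s)⁻¹ ∂Hu.measure)
        - ∫ s in Iic (min T t), ((1 - leftLim (⇑H) s)⁻¹) ^ 2 ∂Hu.measure := by
    have hptw : EqOn
        (fun s => ((if T < s then (1 : ℝ) else 0) - leftLim (⇑H) s) /
          (1 - leftLim (⇑H) s) ^ 2)
        (fun s => (1 - leftLim (⇑H) s)⁻¹
          - (if s ≤ T then ((1 - leftLim (⇑H) s)⁻¹) ^ 2 else 0)) (Iic t) := by
      intro s hs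
      have hd : (1 : ℝ) - leftLim (⇑H) s ≠ 0 := ne_of_gt (hpos s (le_trans hs ht))
      simp only
      by_cases h : T < s
      · rw [if_pos h, if_neg (not_le.2 h), sub_zero]
        field_simp
      · rw [if_neg h, if_pos (not_lt.1 h)]
        field_simp
        ring
    rw [setIntegral_congr_fun measurableSet_Iic hptw, integral_sub intJ intB']
    congr 1
    have hind : (fun s => if s ≤ T then ((1 - leftLim (⇑H) s)⁻¹) ^ 2 else 0)
        = (Iic T).indicator (fun s => ((1 - leftLim (⇑H) s)⁻¹) ^ 2) := by
      funext s; simp [Set.indicator_apply, mem_Iic]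
    rw [hind, integral_indicator measurableSet_Iic,
      Measure.restrict_restrict measurableSet_Iic, Iic_inter_Iic]
  -- L1
  have hL1 := stieltjes_L1 H Hu ht hHcont hHbot hHτ hHubot
  -- integrability on Iio t
  have intM : Integrable (fun s => Hu s * ((1 - leftLim (⇑H) s)⁻¹) ^ 2)
      (H.measure.restrict (Iio t)) := by
    refine integrable_restrict_of_bdd measurableSet_Iio hνfin (mHu.mul mA2)
      (C := Hu t * B ^ 2) ?_
    intro s hs
    rw [abs_mul, abs_of_nonneg (hHu0 s)]
    have h1 := hqb s (le_of_lt (lt_of_lt_of_le hs ht))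
    have h2 := Hu.mono (le_of_lt hs)
    nlinarith [hHu0 s, abs_nonneg (((1 - leftLim (⇑H) s)⁻¹) ^ 2)]
  have intN : Integrable (fun s => if T ≤ s then ((1 - leftLim (⇑H) s)⁻¹) ^ 2 else 0)
      (H.measure.restrict (Iio t)) := by
    refine integrable_restrict_of_bdd measurableSet_Iio hνfin
      (Measurable.ite measurableSet_Ici mA2 measurable_const) (C := B ^ 2) ?_
    intro s hs
    by_cases h : T ≤ s
    · rw [if_pos h]; exact hqb s (le_of_lt (lt_of_lt_of_le hs ht))
    · rw [if_neg h, abs_zero]; positivity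
  -- the N integral
  have hN : (∫ s in Iio t, (if T ≤ s then ((1 - leftLim (⇑H) s)⁻¹) ^ 2 else 0) ∂H.measure)
      = ∫ s in Ico T t, ((1 - leftLim (⇑H) s)⁻¹) ^ 2 ∂H.measure := by
    have hind : (fun s => if T ≤ s then ((1 - leftLim (⇑H) s)⁻¹) ^ 2 else 0)
        = (Ici T).indicator (fun s => ((1 - leftLim (⇑H) s)⁻¹) ^ 2) := by
      funext s; simp [Set.indicator_apply, mem_Ici]
    rw [hind, integral_indicator measurableSet_Ici,
      Measure.restrict_restrict measurableSet_Ici, Ici_inter_Iio]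
  have key : (∫ s in Iic t, ((if T < s then (1 : ℝ) else 0) - leftLim (⇑H) s) /
          (1 - leftLim (⇑H) s) ^ 2 ∂Hu.measure)
        + ((if T ≤ t ∧ δ = true then (1 : ℝ) else 0) - Hu t) / (1 - leftLim (⇑H) t)
        - (∫ s in Iio t, ((if T ≤ s ∧ δ = true then (1 : ℝ) else 0) - Hu s) /
            (1 - leftLim (⇑H) s) ^ 2 ∂H.measure) =
        (if δ = true ∧ T ≤ t then (1 : ℝ) else 0) / (1 - leftLim (⇑H) T) -
          ∫ s in Iic (min T t), ((1 - leftLim (⇑H) s)⁻¹) ^ 2 ∂Hu.measure := by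
    cases δ
    · -- δ = false
      simp only [Bool.false_eq_true, and_false, false_and, if_false]
      have hI3 : (∫ s in Iio t, ((0:ℝ) - Hu s) / (1 - leftLim (⇑H) s) ^ 2 ∂H.measure)
          = - ∫ s in Iio t, Hu s * ((1 - leftLim (⇑H) s)⁻¹) ^ 2 ∂H.measure := by
        rw [← integral_neg]
        apply setIntegral_congr_fun measurableSet_Iio
        intro s _
        simp only
        rw [zero_sub, div_eq_mul_inv, ← inv_pow]
        ring
      rw [hA, hL1, hI3, zero_div, div_eq_mul_inv]
      ring
    · -- δ = true
      simp only [and_true, true_and]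
      have hI3 : (∫ s in Iio t, ((if T ≤ s then (1:ℝ) else 0) - Hu s) /
            (1 - leftLim (⇑H) s) ^ 2 ∂H.measure)
          = (∫ s in Iio t, (if T ≤ s then ((1 - leftLim (⇑H) s)⁻¹) ^ 2 else 0) ∂H.measure)
            - ∫ s in Iio t, Hu s * ((1 - leftLim (⇑H) s)⁻¹) ^ 2 ∂H.measure := by
        rw [← integral_sub intN intM]
        apply setIntegral_congr_fun measurableSet_Iio
        intro s _
        simp only
        by_cases h : T ≤ s
        · rw [if_pos h, if_pos h, sub_div, div_eq_mul_inv, div_eq_mul_inv, ← inv_pow]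
          ring
        · rw [if_neg h, if_neg h, zero_sub, zero_sub, div_eq_mul_inv, ← inv_pow]
          ring
      rw [hA, hL1, hI3, hN]
      by_cases hTt : T ≤ t
      · -- split Iio t
        have hdisj : Disjoint (Iio T) (Ico T t) :=
          disjoint_left.mpr (fun x hx hx2 => absurd hx2.1 (not_le.2 hx))
        have intIioT : IntegrableOn (fun s => ((1 - leftLim (⇑H) s)⁻¹) ^ 2)
            (Iio T) H.measure := by
          refine integrable_restrict_of_bdd measurableSet_Iio ?_ mA2 (C := B ^ 2) ?_
          · rw [stieltjes_measure_Iio H hHbot]; exact ENNReal.ofReal_ne_top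
          · intro s hs
            exact hqb s (le_of_lt (lt_of_lt_of_le hs hT))
        have intIco : IntegrableOn (fun s => ((1 - leftLim (⇑H) s)⁻¹) ^ 2)
            (Ico T t) H.measure := by
          refine integrable_restrict_of_bdd measurableSet_Ico ?_ mA2 (C := B ^ 2) ?_
          · rw [H.measure_Ico]; exact ENNReal.ofReal_ne_top
          · intro s hs
            exact hqb s (le_of_lt (lt_of_lt_of_le hs.2 ht))
        have hsplit := setIntegral_union hdisj measurableSet_Ico intIioT intIco
        rw [Iio_union_Ico_eq_Iio hTt] at hsplit
        have hE : (∫ s in Ico T t, ((1 - leftLim (⇑H) s)⁻¹) ^ 2 ∂H.measure)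
            = (1 - leftLim (⇑H) t)⁻¹ - (1 - leftLim (⇑H) T)⁻¹ := by
          have h1 := stieltjes_key_int H ht hHcont hHbot hHτ
          have h2 := stieltjes_key_int H hT hHcont hHbot hHτ
          rw [hsplit, h2] at h1
          linarith
        rw [hE, if_pos hTt]
        ring
      · have hempty : Ico T t = ∅ := Ico_eq_empty (fun h => hTt h.le)
        rw [hempty, Measure.restrict_empty, integral_zero_measure, if_neg hTt]
        ring
  refine ⟨key, ?_⟩
  simp only [infl]
  rw [key]
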